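/- Let V₁ be a finite-dimensional real normed space, F₁ : V₁ → ℝ a continuous, positively 1-homogeneous function with F₁(u) > 0 for all u ≠ 0 which is convex and strictly convex off rays, let V₂ be a real vector space and μ : V₁ → V₂ a surjective linear map. Then the subduced function F₂(v) = inf{F₁(u) : μ(u) = v} is strictly convex off rays: for all t ∈ (0,1) and all v, ṽ ∈ V₂ such that neither of v, ṽ is a nonnegative scalar multiple of the other, F₂(tv + (1−t)ṽ) < tF₂(v) + (1−t)F₂(ṽ). -/

import Mathlib

-- coercivity lemma
lemma coercive_aux {V₁ : Type*} [NormedAddCommGroup V₁] [NormedSpace ℝ V₁]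
    [FiniteDimensional ℝ V₁] [Nontrivial V₁]
    (F₁ : V₁ → ℝ) (hF₁c : Continuous F₁)
    (hF₁h : ∀ l : ℝ, 0 < l → ∀ u, F₁ (l • u) = l * F₁ u)
    (hF₁p : ∀ u : V₁, u ≠ 0 → 0 < F₁ u) :
    ∃ c : ℝ, 0 < c ∧ ∀ u : V₁, c * ‖u‖ ≤ F₁ u := by
  have hF0 : F₁ 0 = 0 := by
    have h2 := hF₁h 2 (by norm_num) 0
    simp at h2; linarith
  obtain ⟨x, hx⟩ := exists_norm_eq V₁ (le_of_lt one_pos)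
  have hsne : (Metric.sphere (0:V₁) 1).Nonempty := ⟨x, by simp [hx]⟩
  obtain ⟨x₀, hx₀mem, hx₀min⟩ := (isCompact_sphere (0:V₁) 1).exists_isMinOn hsne
    hF₁c.continuousOn
  have hx₀ne : x₀ ≠ 0 := by
    intro h; rw [Metric.mem_sphere, dist_zero_right, h] at hx₀mem; simp at hx₀mem
  refine ⟨F₁ x₀, hF₁p _ hx₀ne, fun u => ?_⟩
  by_cases hu : u = 0
  · simp [hu, hF0]
  · have hnu : (0:ℝ) < ‖u‖ := norm_pos_iff.mpr hu
    have : F₁ u = ‖u‖ * F₁ (‖u‖⁻¹ • u) := by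
      rw [← hF₁h ‖u‖ hnu]
      rw [smul_smul, mul_inv_cancel₀ (ne_of_gt hnu), one_smul]
    rw [this, mul_comm (F₁ x₀)]
    have hmem : ‖u‖⁻¹ • u ∈ Metric.sphere (0:V₁) 1 := by
      simp [norm_smul, abs_of_pos (inv_pos.mpr hnu), inv_mul_cancel₀ (ne_of_gt hnu)]
    exact mul_le_mul_of_nonneg_left (hx₀min hmem) (le_of_lt hnu)

-- existence of minimizer
lemma min_exists {V₁ V₂ : Type*} [NormedAddCommGroup V₁] [NormedSpace ℝ V₁]
    [FiniteDimensional ℝ V₁] [AddCommGroup V₂] [Module ℝ V₂]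
    (F₁ : V₁ → ℝ) (hF₁c : Continuous F₁)
    (c : ℝ) (hc : 0 < c) (hcoer : ∀ u : V₁, c * ‖u‖ ≤ F₁ u)
    (μ : V₁ →ₗ[ℝ] V₂) (v : V₂) (u₀ : V₁) (hu₀ : μ u₀ = v) :
    ∃ u : V₁, μ u = v ∧ ∀ w : V₁, μ w = v → F₁ u ≤ F₁ w := by
  set S : Set V₁ := {u | μ u = v} with hS
  have hSclosed : IsClosed S := by
    have : S = (fun w => u₀ + w) '' (LinearMap.ker μ : Set V₁) := by
      ext w
      simp only [Set.mem_image, SetLike.mem_coe, LinearMap.mem_ker, hS, Set.mem_setOf_eq]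
      constructor
      · intro hw
        exact ⟨w - u₀, by simp [map_sub, hw, hu₀], by abel⟩
      · rintro ⟨z, hz, rfl⟩
        simp [map_add, hz, hu₀]
    rw [this]
    exact (Homeomorph.addLeft u₀).isClosedMap _ (Submodule.closed_of_finiteDimensional _)
  set R : ℝ := (F₁ u₀ + 1) / c with hR
  have hu₀ball : ‖u₀‖ ≤ R := by
    rw [hR, le_div_iff₀ hc]
    have := hcoer u₀
    nlinarith
  set K : Set V₁ := S ∩ Metric.closedBall 0 R with hK
  have hKcompact : IsCompact K :=
    (isCompact_closedBall (0:V₁) R).inter_left hSclosed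
  have hKne : K.Nonempty := ⟨u₀, hu₀, by simpa [Metric.mem_closedBall] using hu₀ball⟩
  obtain ⟨u, ⟨huS, huB⟩, humin⟩ := hKcompact.exists_isMinOn hKne hF₁c.continuousOn
  refine ⟨u, huS, fun w hw => ?_⟩
  by_cases hwB : w ∈ Metric.closedBall (0:V₁) R
  · exact humin ⟨hw, hwB⟩
  · have hwn : R < ‖w‖ := by simpa [Metric.mem_closedBall, dist_zero_right] using hwB
    have h1 : F₁ u ≤ F₁ u₀ := humin ⟨hu₀, by simpa [Metric.mem_closedBall] using hu₀ball⟩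
    have h2 : c * ‖w‖ ≤ F₁ w := hcoer w
    have h3 : c * R < c * ‖w‖ := by exact (mul_lt_mul_iff_right₀ hc).mpr hwn
    have h4 : c * R = F₁ u₀ + 1 := by rw [hR]; field_simp [hc.ne']
    linarith

/-- The subduced function F₂(v) = inf{F₁(u) : μ(u) = v} is strictly convex off rays. -/
theorem stmt_8 {V₁ V₂ : Type*}
    [NormedAddCommGroup V₁] [NormedSpace ℝ V₁] [FiniteDimensional ℝ V₁]
    [AddCommGroup V₂] [Module ℝ V₂]
    (F₁ : V₁ → ℝ) (hF₁c : Continuous F₁)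
    (hF₁h : ∀ l : ℝ, 0 < l → ∀ u, F₁ (l • u) = l * F₁ u)
    (hF₁p : ∀ u : V₁, u ≠ 0 → 0 < F₁ u)
    (hconv : ∀ u u' : V₁, ∀ t ∈ Set.Icc (0:ℝ) 1,
      F₁ (t • u + (1 - t) • u') ≤ t * F₁ u + (1 - t) * F₁ u')
    (hstrict : ∀ u u' : V₁, ∀ t ∈ Set.Ioo (0:ℝ) 1,
      ¬ (∃ α : ℝ, 0 ≤ α ∧ u = α • u') → ¬ (∃ α : ℝ, 0 ≤ α ∧ u' = α • u) →
      F₁ (t • u + (1 - t) • u') < t * F₁ u + (1 - t) * F₁ u')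
    (μ : V₁ →ₗ[ℝ] V₂) (hsurj : Function.Surjective μ) :
    ∀ t ∈ Set.Ioo (0:ℝ) 1, ∀ v v' : V₂,
      ¬ (∃ α : ℝ, 0 ≤ α ∧ v = α • v') → ¬ (∃ α : ℝ, 0 ≤ α ∧ v' = α • v) →
      sInf (F₁ '' {u | μ u = t • v + (1 - t) • v'})
        < t * sInf (F₁ '' {u | μ u = v}) + (1 - t) * sInf (F₁ '' {u | μ u = v'}) := by
  intro t ht v v' hv hv'
  -- nontriviality
  rcases subsingleton_or_nontrivial V₁ with hsub | hnt
  · exfalso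
    apply hv
    obtain ⟨w, hw⟩ := hsurj v
    obtain ⟨w', hw'⟩ := hsurj v'
    have : w = w' := Subsingleton.elim w w'
    exact ⟨1, by norm_num, by rw [← hw, ← hw', this, one_smul]⟩
  obtain ⟨c, hc, hcoer⟩ := coercive_aux F₁ hF₁c hF₁h hF₁p
  obtain ⟨u₀, hu₀⟩ := hsurj v
  obtain ⟨u₀', hu₀'⟩ := hsurj v'
  obtain ⟨u, huμ, humin⟩ := min_exists F₁ hF₁c c hc hcoer μ v u₀ hu₀
  obtain ⟨u', huμ', humin'⟩ := min_exists F₁ hF₁c c hc hcoer μ v' u₀' hu₀'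
  have heq : sInf (F₁ '' {w | μ w = v}) = F₁ u := by
    apply IsLeast.csInf_eq
    exact ⟨⟨u, huμ, rfl⟩, by rintro x ⟨w, hw, rfl⟩; exact humin w hw⟩
  have heq' : sInf (F₁ '' {w | μ w = v'}) = F₁ u' := by
    apply IsLeast.csInf_eq
    exact ⟨⟨u', huμ', rfl⟩, by rintro x ⟨w, hw, rfl⟩; exact humin' w hw⟩
  rw [heq, heq']
  have hmid : μ (t • u + (1 - t) • u') = t • v + (1 - t) • v' := by
    simp [map_add, map_smul, huμ, huμ']
  have hub : sInf (F₁ '' {w | μ w = t • v + (1 - t) • v'}) ≤ F₁ (t • u + (1 - t) • u') := by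
    apply csInf_le
    · -- bddBelow : bounded below by 0
      refine ⟨0, ?_⟩
      rintro x ⟨w, hw, rfl⟩
      have := hcoer w
      have : (0:ℝ) ≤ c * ‖w‖ := by positivity
      linarith [hcoer w]
    · exact ⟨t • u + (1 - t) • u', hmid, rfl⟩
  have hne1 : ¬ (∃ α : ℝ, 0 ≤ α ∧ u = α • u') := by
    rintro ⟨α, hα, rfl⟩
    exact hv ⟨α, hα, by rw [← huμ, ← huμ', map_smul]⟩
  have hne2 : ¬ (∃ α : ℝ, 0 ≤ α ∧ u' = α • u) := by
    rintro ⟨α, hα, h⟩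
    exact hv' ⟨α, hα, by rw [← huμ, ← huμ', h, map_smul]⟩
  exact lt_of_le_of_lt hub (hstrict u u' t ht hne1 hne2)
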